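/- Let m be a nonnegative integer and i_1, …, i_m ∈ {1, …, 2n}. Then there exists a polynomial Q ∈ ℚ(q)[y_1,…,y_{2n(2n+1)}] of total degree at most m, depending only on n, m and i_1,…,i_m, such that for all choices of nonnegative integers α_{i,j} (1 ≤ i ≠ j ≤ 2n), β_i, γ_i (1 ≤ i ≤ 2n), the evaluation of D_{i_1} ∘ ⋯ ∘ D_{i_m}(P(α|β|γ)) at z_1 = … = z_{2n} = 1 equals Q evaluated at the tuple ((α_{i,j}), (β_i), (γ_i)). -/

import Mathlib

attribute [local instance] Classical.propDecidable

open MvPolynomial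

/-! ### Noncrossing matchings -/

/-- `f` encodes a noncrossing perfect matching of the points `0, …, 2n-1`
(point `p` of the paper, which is 1-indexed, corresponds to index `p-1`):
`f` is a fixed-point-free involution and no two arches cross. -/
def IsNCMatching (n : ℕ) (f : Fin (2*n) → Fin (2*n)) : Prop :=
  (∀ i, f (f i) = i) ∧ (∀ i, f i ≠ i) ∧
    ∀ i j : Fin (2*n), i < j → j < f i → f i < f j → False

/-- The type of noncrossing matchings of size `n`. -/
def NCM (n : ℕ) := {f : Fin (2*n) → Fin (2*n) // IsNCMatching n f}

noncomputable instance (n : ℕ) : Fintype (NCM n) := by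
  unfold NCM; exact Fintype.ofFinite _

/-- The noncrossing matching `()_n` consisting of `n` nested arches. -/
def nestedNC (n : ℕ) : NCM n :=
  ⟨fun i => ⟨2*n - 1 - i.val, by have := i.isLt; omega⟩, by
    refine ⟨fun i => ?_, fun i => ?_, fun i j h1 h2 h3 => ?_⟩
    · have := i.isLt
      apply Fin.ext
      show 2*n - 1 - (2*n - 1 - i.val) = i.val
      omega
    · have := i.isLt
      intro h
      have h' : 2*n - 1 - i.val = i.val := congrArg Fin.val h
      omega
    · have hi := i.isLt; have hj := j.isLt
      rw [Fin.lt_def] at h1 h2 h3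
      have e2 : j.val < 2*n - 1 - i.val := h2
      have e3 : 2*n - 1 - i.val < 2*n - 1 - j.val := h3
      omega⟩

/-- The Temperley–Lieb operator `e_j` (with `j` the 1-indexed label of the paper,
acting on points `j`, `j+1`, cyclically identifying `2n+1` with `1`;
point `p` corresponds to index `p-1`). -/
def TLe (m : ℕ) (j : ℕ) (f : Fin m → Fin m) : Fin m → Fin m :=
  fun i =>
    let a : Fin m := ⟨(j - 1) % m, Nat.mod_lt _ i.pos⟩
    let b : Fin m := ⟨j % m, Nat.mod_lt _ i.pos⟩
    if i = a then b else if i = b then a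
    else if f i = a then f b else if f i = b then f a else f i

/-- Concatenation `σπ` of two matchings (as functions on points). -/
def concatF (n n' : ℕ) (f : Fin (2*n) → Fin (2*n)) (g : Fin (2*n') → Fin (2*n')) :
    Fin (2*(n+n')) → Fin (2*(n+n')) := fun i =>
  if h : i.val < 2*n then
    ⟨(f ⟨i.val, h⟩).val, by have := (f ⟨i.val, h⟩).isLt; omega⟩
  else
    ⟨2*n + (g ⟨i.val - 2*n, by have := i.isLt; omega⟩).val,
      by have := (g ⟨i.val - 2*n, by have := i.isLt; omega⟩).isLt; omega⟩

/-- `(π)_m`: the matching `π` (of size `n`) surrounded by `m` nested arches. -/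
def nestF (n m : ℕ) (f : Fin (2*n) → Fin (2*n)) :
    Fin (2*(n+m)) → Fin (2*(n+m)) := fun i =>
  if h : i.val < m ∨ 2*n + m ≤ i.val then
    ⟨2*(n+m) - 1 - i.val, by have := i.isLt; omega⟩
  else
    ⟨m + (f ⟨i.val - m, by have := i.isLt; omega⟩).val,
      by have := (f ⟨i.val - m, by have := i.isLt; omega⟩).isLt; omega⟩

/-- Rotation `ρ` : `i` and `j` are matched in `ρ(π)` iff `i-1` and `j-1` are matched in `π`. -/
def rotF (m : ℕ) (f : Fin m → Fin m) : Fin m → Fin m := fun i =>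
  ⟨((f ⟨(i.val + (m - 1)) % m, Nat.mod_lt _ i.pos⟩).val + 1) % m, Nat.mod_lt _ i.pos⟩

/-- The length of the `i`-th row (0-indexed, from the top) of the Young diagram `λ(π)`:
if `v_0 < … < v_{n-1}` are the (0-indexed) positions of the left endpoints of the arches,
then the `i`-th row from the top has `v_{n-1-i} - (n-1-i)` boxes. -/
noncomputable def lamRowF (n : ℕ) (f : Fin (2*n) → Fin (2*n)) (i : ℕ) : ℕ :=
  if i < n then
    (((Finset.univ.filter fun j : Fin (2*n) => j < f j).sort (· ≤ ·)).map Fin.val).getD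
        (n - 1 - i) 0 - (n - 1 - i)
  else 0

/-- `|λ(π)|`, the number of boxes of the Young diagram of `π`. -/
noncomputable def numBoxes (n : ℕ) (f : Fin (2*n) → Fin (2*n)) : ℕ :=
  ∑ i ∈ Finset.range n, lamRowF n f i

/-- `σ ≤ π`, i.e. `λ(σ)` is contained in `λ(π)`. -/
noncomputable def LamLe (n : ℕ) (f g : Fin (2*n) → Fin (2*n)) : Prop :=
  ∀ i, lamRowF n f i ≤ lamRowF n g i

/-- `σ < π`, i.e. `λ(σ)` is strictly contained in `λ(π)`. -/
noncomputable def LamLt (n : ℕ) (f g : Fin (2*n) → Fin (2*n)) : Prop :=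
  LamLe n f g ∧ ∃ i, lamRowF n f i < lamRowF n g i

/-- `σ ↗_j π` : `λ(π)` is obtained from `λ(σ)` by adding one box on the `j`-th diagonal
(the box in 0-indexed row `r` and 0-indexed column `c` lies on diagonal `n + c - r`,
matching the paper's 1-indexed `n + c - i`). -/
noncomputable def UpArrow (n : ℕ) (f g : Fin (2*n) → Fin (2*n)) (j : ℕ) : Prop :=
  ∃ r, r < n ∧ lamRowF n g r = lamRowF n f r + 1 ∧
    (∀ i, i ≠ r → lamRowF n g i = lamRowF n f i) ∧
    n + lamRowF n f r - r = j

/-- The number of boxes of `λ(π)` lying on the `d`-th diagonal. -/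
noncomputable def boxesOnDiag (n : ℕ) (f : Fin (2*n) → Fin (2*n)) (d : ℕ) : ℕ :=
  ((Finset.range n ×ˢ Finset.range n).filter
    (fun rc => rc.2 < lamRowF n f rc.1 ∧ n + rc.2 - rc.1 = d)).card

/-- The cells `(row, column)` (0-indexed) of the Young diagram `λ(π)`. -/
noncomputable def cellsF (n : ℕ) (f : Fin (2*n) → Fin (2*n)) : Finset (ℕ × ℕ) :=
  (Finset.range n ×ˢ Finset.range n).filter fun rc => rc.2 < lamRowF n f rc.1

/-- `f_{λ(π)}`: the number of standard Young tableaux of shape `λ(π)`, i.e. of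
bijective fillings of the cells with `0, …, |λ|-1` strictly increasing along
rows and down columns. -/
noncomputable def numSYT (n : ℕ) (f : Fin (2*n) → Fin (2*n)) : ℕ :=
  Nat.card {T : {c : ℕ × ℕ // c ∈ cellsF n f} ≃ Fin (cellsF n f).card //
    (∀ a b : {c : ℕ × ℕ // c ∈ cellsF n f}, a.1.1 = b.1.1 → a.1.2 < b.1.2 → T a < T b) ∧
    (∀ a b : {c : ℕ × ℕ // c ∈ cellsF n f}, a.1.2 = b.1.2 → a.1.1 < b.1.1 → T a < T b)}

/-! ### Fully packed loops -/

/-- The vertices relevant for an FPL of size `n`: the `n × n` grid vertices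
(`(column, row)`, 0-indexed, row 0 at the top) together with the `4n` external
edge endpoints, indexed counterclockwise starting with the topmost on the left side. -/
def FVert (n : ℕ) := (Fin n × Fin n) ⊕ (Fin (4*n))

/-- The grid vertex to which the `t`-th external edge is attached
(`t` counted counterclockwise: down the left side, then along the bottom,
up the right side, and along the top). -/
def extVert {n : ℕ} (t : Fin (4*n)) : Fin n × Fin n :=
  if h1 : t.val < n then (⟨0, by omega⟩, ⟨t.val, h1⟩)
  else if h2 : t.val < 2*n then (⟨t.val - n, by omega⟩, ⟨n - 1, by omega⟩)
  else if h3 : t.val < 3*n then (⟨n - 1, by omega⟩, ⟨n - 1 - (t.val - 2*n), by omega⟩)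
  else (⟨n - 1 - (t.val - 3*n), by have := t.isLt; omega⟩, ⟨0, by have := t.isLt; omega⟩)

/-- Adjacency in the `n × n` grid graph. -/
def gridAdj {n : ℕ} (u v : Fin n × Fin n) : Prop :=
  (u.1 = v.1 ∧ (u.2.val + 1 = v.2.val ∨ v.2.val + 1 = u.2.val)) ∨
  (u.2 = v.2 ∧ (u.1.val + 1 = v.1.val ∨ v.1.val + 1 = u.1.val))

/-- Adjacency in the `n × n` grid together with all `4n` external edges. -/
def fullAdj {n : ℕ} : FVert n → FVert n → Prop
  | Sum.inl u, Sum.inl v => gridAdj u v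
  | Sum.inl u, Sum.inr t => u = extVert t
  | Sum.inr t, Sum.inl u => u = extVert t
  | Sum.inr _, Sum.inr _ => False

/-- A fully packed loop configuration of size `n`: a subgraph of the grid with
external edges in which every grid vertex has degree `2` and which contains
exactly every other external edge, beginning with the topmost at the left side. -/
structure FPL (n : ℕ) where
  adj : FVert n → FVert n → Prop
  symm : ∀ u v, adj u v → adj v u
  sub : ∀ u v, adj u v → fullAdj u v
  degGrid : ∀ u : Fin n × Fin n, {v | adj (Sum.inl u) v}.ncard = 2
  degExtEven : ∀ t : Fin (4*n), t.val % 2 = 0 → {v | adj (Sum.inr t) v}.ncard = 1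
  degExtOdd : ∀ t : Fin (4*n), t.val % 2 = 1 → {v | adj (Sum.inr t) v}.ncard = 0

/-- `F` has link pattern `f` : the chosen external edges, numbered counterclockwise by
`Fin (2n)` (the `k`-th chosen one being the external edge at boundary position `2k`),
are matched in pairs by `f` according to connectivity in `F`. -/
def hasLinkPattern {n : ℕ} (F : FPL n) (f : Fin (2*n) → Fin (2*n)) : Prop :=
  ∀ k l : Fin (2*n), f k = l ↔ (k ≠ l ∧
    Relation.ReflTransGen F.adj
      (Sum.inr ⟨2*k.val, by have := k.isLt; omega⟩)
      (Sum.inr ⟨2*l.val, by have := l.isLt; omega⟩))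

/-- `A_π`: the number of FPLs of size `n` with link pattern `π`. -/
noncomputable def countFPL (n : ℕ) (f : Fin (2*n) → Fin (2*n)) : ℕ :=
  Nat.card {F : FPL n // hasLinkPattern F f}

/-! ### Wheel polynomials and the operators `S_k`, `D_k` -/

/-- The cyclic successor `k+1` on `Fin m`. -/
def cycS {m : ℕ} (i : Fin m) : Fin m := ⟨(i.val + 1) % m, Nat.mod_lt _ i.pos⟩

/-- `S_k`: the algebra automorphism exchanging the variables `z_k` and `z_{k+1}`
(cyclically, `z_{2n+1} := z_1`). -/
noncomputable def swapVar {F : Type*} [CommSemiring F] {N : ℕ} (k : Fin N)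
    (f : MvPolynomial (Fin N) F) : MvPolynomial (Fin N) F :=
  MvPolynomial.rename (Equiv.swap k (cycS k)) f

/-- `D` is the operator `D_k : f ↦ ((q z_k - q⁻¹ z_{k+1})/(z_{k+1} - z_k))·(S_k f - f)`,
characterized by `(z_{k+1} - z_k) · D f = (q z_k - q⁻¹ z_{k+1}) · (S_k f - f)`. -/
def IsDOp {F : Type*} [Field F] {N : ℕ} (q : F) (k : Fin N)
    (D : MvPolynomial (Fin N) F → MvPolynomial (Fin N) F) : Prop :=
  ∀ f, (X (cycS k) - X k) * D f = (C q * X k - C q⁻¹ * X (cycS k)) * (swapVar k f - f)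

/-- A wheel polynomial of order `n`: homogeneous of degree `n(n-1)` and vanishing
under every substitution `z_j := q² z_i`, `z_k := q⁴ z_i` with `i < j < k`. -/
def IsWheel {F : Type*} [Field F] (q : F) (n : ℕ) (p : MvPolynomial (Fin (2*n)) F) : Prop :=
  p.IsHomogeneous (n*(n-1)) ∧
  ∀ i j k : Fin (2*n), i < j → j < k →
    (MvPolynomial.aeval (fun t : Fin (2*n) =>
      if t = j then C (q^2) * X i else if t = k then C (q^4) * X i else X t)) p = 0

/-- The vector space `W_n[z]` of wheel polynomials of order `n`, as a submodule. -/
noncomputable def wheelSpace (F : Type*) [Field F] (q : F) (n : ℕ) :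
    Submodule F (MvPolynomial (Fin (2*n)) F) :=
  (homogeneousSubmodule (Fin (2*n)) F (n*(n-1))) ⊓
  ⨅ (i : Fin (2*n)) (j : Fin (2*n)) (k : Fin (2*n)) (_ : i < j) (_ : j < k),
    LinearMap.ker (MvPolynomial.aeval (R := F) (fun t : Fin (2*n) =>
      if t = j then C (q^2) * X i else if t = k then C (q^4) * X i else X t)).toLinearMap

/-- `Ψ_{()_n} = (q - q⁻¹)^{-n(n-1)} ∏_{1 ≤ i < j ≤ n} (q z_i - q⁻¹ z_j)(q z_{n+i} - q⁻¹ z_{n+j})`. -/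
noncomputable def PsiEmpty {F : Type*} [Field F] (q : F) (n : ℕ) :
    MvPolynomial (Fin (2*n)) F :=
  C (((q - q⁻¹)^(n*(n-1)))⁻¹) *
    ∏ ij ∈ Finset.univ.filter (fun ij : Fin n × Fin n => ij.1 < ij.2),
      ((C q * X ⟨ij.1.val, by have := ij.1.isLt; omega⟩ -
        C q⁻¹ * X ⟨ij.2.val, by have := ij.2.isLt; omega⟩) *
       (C q * X ⟨n + ij.1.val, by have := ij.1.isLt; omega⟩ -
        C q⁻¹ * X ⟨n + ij.2.val, by have := ij.2.isLt; omega⟩))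

/-- The `Fin (2n)`-index of the operator `D_j` for the paper's (1-indexed, cyclic,
`D_{j+2n} = D_j`) index `j`. -/
def finOfIdx (N : ℕ) (hN : 0 < N) (j : ℕ) : Fin N := ⟨(j - 1) % N, Nat.mod_lt _ hN⟩

/-- The list of `D`-operator indices for `D_π`: for each box of `λ(π)`, read row by row
from top to bottom and left to right within each row, the (0-indexed) index of the
diagonal `n + c - i` of that box. -/
def diagList1 (n : ℕ) (lam : ℕ → ℕ) : List (Fin (2*n)) :=
  (List.finRange n).flatMap fun i =>
    (List.range (lam i.val)).map fun c =>
      ⟨(n - 1 + c - i.val) % (2*n), Nat.mod_lt _ (by have := i.isLt; omega)⟩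

/-- The wheel polynomial `D_π`, obtained from `Ψ_{()_n}` by successively applying,
for each box of `λ(π)` read row by row from top to bottom and left to right,
the operator `D` indexed by the diagonal of that box. -/
noncomputable def DpiF {F : Type*} [Field F] (q : F) (n : ℕ)
    (D : Fin (2*n) → MvPolynomial (Fin (2*n)) F → MvPolynomial (Fin (2*n)) F)
    (f : Fin (2*n) → Fin (2*n)) : MvPolynomial (Fin (2*n)) F :=
  (diagList1 n (lamRowF n f)).foldl (fun p k => D k p) (PsiEmpty q n)

/-- Operator indices for the second stage of `D_{π₁,π₂}`: for each box of `λ(π₂)`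
(in reading order) the index of `D_{c-i}` (paper 1-indexed diagonal `c - i`, taken
mod `2n`). -/
def diagList2 (n rows : ℕ) (h : rows ≤ n) (lam : ℕ → ℕ) : List (Fin (2*n)) :=
  (List.finRange rows).flatMap fun i =>
    (List.range (lam i.val)).map fun c =>
      ⟨(((c : ℤ) - (i.val : ℤ) - 1) % ((2*n : ℕ) : ℤ)).toNat, by
        have hi := i.isLt
        have h2 : (0:ℤ) < ((2*n : ℕ) : ℤ) := by exact_mod_cast (show (0:ℕ) < 2*n by omega)
        have h3 := Int.emod_nonneg ((c : ℤ) - (i.val : ℤ) - 1) (ne_of_gt h2)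
        have h4 := Int.emod_lt_of_pos ((c : ℤ) - (i.val : ℤ) - 1) h2
        omega⟩

/-- The wheel polynomial `D_{π₁,π₂}` (with `π₁` of size `n₁`, `π₂` of size `n₂`):
starting from `D_{(π₁)_{n₂}}`, apply for each box of `λ(π₂)`, read row by row from top
to bottom and left to right, the operator `D` indexed (cyclically) by `c - i`. -/
noncomputable def DpiPair {F : Type*} [Field F] (q : F) (n1 n2 : ℕ)
    (D : Fin (2*(n1+n2)) → MvPolynomial (Fin (2*(n1+n2))) F → MvPolynomial (Fin (2*(n1+n2))) F)
    (f1 : Fin (2*n1) → Fin (2*n1)) (f2 : Fin (2*n2) → Fin (2*n2)) :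
    MvPolynomial (Fin (2*(n1+n2))) F :=
  (diagList2 (n1+n2) n2 (by omega) (lamRowF n2 f2)).foldl (fun p k => D k p)
    (DpiF q (n1+n2) D (nestF n1 n2 f1))

/-- `Psi` is the family `(Ψ_π)_{π ∈ NC_n}`: it starts with `Ψ_{()_n}` and satisfies the
recursion `Ψ_π = D_j(Ψ_σ) - Σ_{τ ∈ e_j⁻¹(σ), τ ∉ {σ,π}} Ψ_τ` whenever `σ ↗_j π`. -/
noncomputable def IsPsiFamily {F : Type*} [Field F] (q : F) (n : ℕ)
    (D : Fin (2*n) → MvPolynomial (Fin (2*n)) F → MvPolynomial (Fin (2*n)) F)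
    (Psi : NCM n → MvPolynomial (Fin (2*n)) F) : Prop :=
  Psi (nestedNC n) = PsiEmpty q n ∧
  ∀ (hn : 0 < n) (j : ℕ) (σ π : NCM n), UpArrow n σ.1 π.1 j →
    Psi π = D (finOfIdx (2*n) (by omega) j) (Psi σ) -
      ∑ τ : NCM n, if TLe (2*n) j τ.1 = σ.1 ∧ τ ≠ σ ∧ τ ≠ π then Psi τ else 0

/-! ### The polynomials `f(i,j)`, `g(i)`, `h(i)` and `P(α|β|γ)` -/

noncomputable def fP {F : Type*} [Field F] (q : F) {N : ℕ} (i j : Fin N) :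
    MvPolynomial (Fin N) F :=
  C (q - q⁻¹)⁻¹ * (C q * X i - C q⁻¹ * X j)

noncomputable def gP {F : Type*} [Field F] (q : F) {N : ℕ} (i : Fin N) :
    MvPolynomial (Fin N) F :=
  C (q - q⁻¹)⁻¹ * (C q - C q⁻¹ * X i)

noncomputable def hP {F : Type*} [Field F] (q : F) {N : ℕ} (i : Fin N) :
    MvPolynomial (Fin N) F :=
  C (q - q⁻¹)⁻¹ * (C q * X i - C q⁻¹)

noncomputable def Pabg {F : Type*} [Field F] (q : F) (n : ℕ)
    (α : Fin (2*n) → Fin (2*n) → ℕ) (β γ : Fin (2*n) → ℕ) :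
    MvPolynomial (Fin (2*n)) F :=
  (∏ i : Fin (2*n), ∏ j : Fin (2*n), if i ≠ j then fP q i j ^ α i j else 1) *
  ∏ i : Fin (2*n), (gP q i ^ β i * hP q i ^ γ i)

/-- The indeterminate `q` of `ℚ(q)`. -/
noncomputable def qQ : RatFunc ℚ := RatFunc.X

/-- `q = e^{2πi/3} ∈ ℂ`. -/
noncomputable def qC : ℂ := Complex.exp (2 * (Real.pi : ℂ) * Complex.I / 3)

/-! ### Auxiliary machinery for `stmt18` -/

noncomputable section Aux18
namespace Aux18
open MvPolynomial Finset

abbrev Fq : Type := RatFunc ℚ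

lemma charZero_Fq : CharZero Fq :=
  charZero_of_injective_algebraMap (RatFunc.algebraMap_injective ℚ)

lemma qQ_sub_ne : qQ - qQ⁻¹ ≠ 0 := by
  intro h
  have hq : (qQ : Fq) ≠ 0 := by simpa [qQ] using (RatFunc.X_ne_zero (K := ℚ))
  have h1 : qQ = qQ⁻¹ := sub_eq_zero.mp h
  have h2 : qQ * qQ = 1 := by
    nth_rewrite 1 [h1]
    exact inv_mul_cancel₀ hq
  have h3 : algebraMap (Polynomial ℚ) Fq (Polynomial.X * Polynomial.X) = algebraMap _ _ 1 := by
    rw [map_mul, map_one, RatFunc.algebraMap_X]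
    exact h2
  have h4 : (Polynomial.X * Polynomial.X : Polynomial ℚ) = 1 := RatFunc.algebraMap_injective ℚ h3
  rw [← pow_two] at h4
  have h5 := congrArg (fun p => Polynomial.coeff p 2) h4
  simp [Polynomial.coeff_X_pow, Polynomial.coeff_one] at h5

lemma cycS_ne {n : ℕ} (k : Fin (2*n)) : cycS k ≠ k := by
  intro h
  have hv : (k.val + 1) % (2*n) = k.val := congrArg Fin.val h
  have hk := k.isLt
  rcases Nat.lt_or_ge (k.val + 1) (2*n) with h' | h'
  · rw [Nat.mod_eq_of_lt h'] at hv; omega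
  · have he : k.val + 1 = 2*n := by omega
    rw [he, Nat.mod_self] at hv
    omega

section Tau

variable {σt : Type*}

/-- Shift `z ↦ z + 1`. -/
def tauA (σt : Type*) : MvPolynomial σt Fq →ₐ[Fq] MvPolynomial σt Fq :=
  aeval (fun i => X i + 1)

/-- Shift `z ↦ z - 1`. -/
def sigA (σt : Type*) : MvPolynomial σt Fq →ₐ[Fq] MvPolynomial σt Fq :=
  aeval (fun i => X i - 1)

lemma tau_sig (f : MvPolynomial σt Fq) : tauA σt (sigA σt f) = f := by
  have h : (tauA σt).comp (sigA σt) = AlgHom.id Fq _ := by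
    apply algHom_ext
    intro i
    simp [tauA, sigA]
  have h2 := AlgHom.congr_fun h f
  simpa using h2

lemma tauA_X (i : σt) : tauA σt (X i) = X i + 1 := aeval_X _ _

lemma tau_rename (e : σt → σt) (f : MvPolynomial σt Fq) :
    tauA σt (rename e f) = rename e (tauA σt f) := by
  rw [tauA, aeval_rename]
  have h : (rename (R := Fq) e).comp (aeval (fun i => X i + 1)) =
      aeval ((fun i => X i + 1) ∘ e) := by
    rw [comp_aeval]
    congr 1
    funext i
    simp
  exact (AlgHom.congr_fun h f).symm

lemma eval1_eq (f : MvPolynomial σt Fq) :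
    eval (fun _ => (1 : Fq)) f = coeff 0 (tauA σt f) := by
  have h : ((aeval (fun _ => (0:Fq)) : MvPolynomial σt Fq →ₐ[Fq] Fq)).comp (tauA σt)
      = aeval (fun _ => (1:Fq)) := by
    rw [tauA, comp_aeval]
    congr 1
    funext i
    simp
  have h2 := AlgHom.congr_fun h f
  rw [AlgHom.comp_apply] at h2
  have e1 : (aeval (fun _ => (1:Fq)) : MvPolynomial σt Fq →ₐ[Fq] Fq) f
      = eval (fun _ => (1:Fq)) f := RingHom.congr_fun (coe_aeval_eq_eval _) f
  have e0 : (aeval (fun _ => (0:Fq)) : MvPolynomial σt Fq →ₐ[Fq] Fq) (tauA σt f)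
      = eval (fun _ => (0:Fq)) (tauA σt f) := RingHom.congr_fun (coe_aeval_eq_eval _) _
  rw [e0, e1] at h2
  rw [← h2, eval_zero', constantCoeff_eq]

end Tau

section Wmem

variable {σt : Type*}

lemma degree_add (a b : σt →₀ ℕ) : (a + b).degree = a.degree + b.degree := by
  have := Finsupp.degree_eq_weight_one (σ := σt) (R := ℕ)
  rw [this]
  exact map_add _ a b

/-- Membership in the `r`-th power of the ideal of polynomials vanishing at `0`. -/
def Wmem (r : ℕ) (p : MvPolynomial σt Fq) : Prop :=
  ∀ m : σt →₀ ℕ, m.degree < r → coeff m p = 0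

lemma Wmem.sub {r : ℕ} {p q : MvPolynomial σt Fq} (hp : Wmem r p) (hq : Wmem r q) :
    Wmem r (p - q) := fun m hm => by
  rw [coeff_sub, hp m hm, hq m hm, sub_zero]

lemma Wmem.mul_left {r : ℕ} (g : MvPolynomial σt Fq) {p : MvPolynomial σt Fq}
    (hp : Wmem r p) : Wmem r (g * p) := by
  classical
  intro m hm
  rw [coeff_mul]
  apply Finset.sum_eq_zero
  intro x hx
  rw [Finset.HasAntidiagonal.mem_antidiagonal] at hx
  have hdeg : x.1.degree + x.2.degree = m.degree := by rw [← degree_add, hx]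
  have : x.2.degree < r := by omega
  rw [hp x.2 this, mul_zero]

lemma degree_mapDomain (e : σt → σt) (u : σt →₀ ℕ) :
    (Finsupp.mapDomain e u).degree = u.degree := by
  rw [Finsupp.degree_eq_weight_one, Finsupp.weight_apply, Finsupp.weight_apply,
    Finsupp.sum_mapDomain_index (by simp) (by intros; rw [add_smul])]

lemma Wmem.rename {r : ℕ} {p : MvPolynomial σt Fq} (hp : Wmem r p) (e : σt → σt) :
    Wmem r (rename e p) := by
  intro m hm
  by_contra hne
  obtain ⟨u, hu1, hu2⟩ := coeff_rename_ne_zero e p m hne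
  apply hu2
  apply hp
  rw [← hu1, degree_mapDomain] at hm
  exact hm

lemma hc_mul_homog_one {u g : MvPolynomial σt Fq} (hu : u.IsHomogeneous 1) (d : ℕ) :
    homogeneousComponent (d+1) (u * g) = u * homogeneousComponent d g := by
  classical
  ext m
  rw [coeff_homogeneousComponent, coeff_mul, coeff_mul]
  by_cases hm : m.degree = d + 1
  · rw [if_pos hm]
    apply Finset.sum_congr rfl
    intro x hx
    rw [Finset.HasAntidiagonal.mem_antidiagonal] at hx
    rw [coeff_homogeneousComponent]
    by_cases hxu : coeff x.1 u = 0
    · rw [hxu, zero_mul, zero_mul]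
    · have hx1 : x.1.degree = 1 := by
        by_contra hc
        exact hxu (hu.coeff_eq_zero hc)
      have hx2 : x.2.degree = d := by
        have hdeg : x.1.degree + x.2.degree = m.degree := by rw [← degree_add, hx]
        omega
      rw [if_pos hx2]
  · rw [if_neg hm]
    symm
    apply Finset.sum_eq_zero
    intro x hx
    rw [Finset.HasAntidiagonal.mem_antidiagonal] at hx
    rw [coeff_homogeneousComponent]
    by_cases hxu : coeff x.1 u = 0
    · rw [hxu, zero_mul]
    · have hx1 : x.1.degree = 1 := by
        by_contra hc
        exact hxu (hu.coeff_eq_zero hc)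
      have hdeg : x.1.degree + x.2.degree = m.degree := by rw [← degree_add, hx]
      have hx2 : x.2.degree ≠ d := by omega
      rw [if_neg hx2, mul_zero]

lemma Wmem_iff_hc {r : ℕ} {p : MvPolynomial σt Fq} :
    Wmem r p ↔ ∀ d < r, homogeneousComponent d p = 0 := by
  constructor
  · intro h d hd
    ext m
    rw [coeff_homogeneousComponent, coeff_zero]
    split_ifs with hm
    · exact h m (hm ▸ hd)
    · rfl
  · intro h m hm
    have h2 := congrArg (coeff m) (h m.degree hm)
    rwa [coeff_homogeneousComponent, if_pos rfl, coeff_zero] at h2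

lemma Wmem_cancel {a b : σt} (hab : a ≠ b) {r : ℕ} {g : MvPolynomial σt Fq}
    (h : Wmem (r+1) ((X a - X b) * g)) : Wmem r g := by
  rw [Wmem_iff_hc] at h ⊢
  intro d hd
  have h2 := h (d+1) (by omega)
  rw [hc_mul_homog_one ((isHomogeneous_X _ _).sub (isHomogeneous_X _ _)) d] at h2
  rcases mul_eq_zero.mp h2 with h3 | h3
  · exact absurd (X_injective (sub_eq_zero.mp h3)) hab
  · exact h3

end Wmem

section Dops

variable {n : ℕ}
  (D : Fin (2*n) → MvPolynomial (Fin (2*n)) Fq → MvPolynomial (Fin (2*n)) Fq)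

lemma X_sub_ne (k : Fin (2*n)) :
    (X (cycS k) - X k : MvPolynomial (Fin (2*n)) Fq) ≠ 0 := by
  intro h
  exact cycS_ne k (X_injective (sub_eq_zero.mp h))

lemma D_add (hD : ∀ k, IsDOp qQ k (D k)) (k : Fin (2*n)) (f g : MvPolynomial (Fin (2*n)) Fq) :
    D k (f + g) = D k f + D k g := by
  apply mul_left_cancel₀ (X_sub_ne k)
  rw [mul_add, hD k f, hD k g, hD k (f + g)]
  simp only [swapVar, map_add]
  ring

lemma D_smul (hD : ∀ k, IsDOp qQ k (D k)) (k : Fin (2*n)) (c : Fq) (f : MvPolynomial (Fin (2*n)) Fq) :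
    D k (c • f) = c • D k f := by
  apply mul_left_cancel₀ (X_sub_ne k)
  rw [hD k (c • f)]
  simp only [swapVar, smul_eq_C_mul, map_mul, rename_C]
  rw [show (X (cycS k) - X k) * (C c * D k f) = C c * ((X (cycS k) - X k) * D k f) by ring,
    hD k f]
  simp only [swapVar]
  ring

lemma D_zero (hD : ∀ k, IsDOp qQ k (D k)) (k : Fin (2*n)) : D k 0 = 0 := by
  apply mul_left_cancel₀ (X_sub_ne k)
  rw [hD k 0]
  simp [swapVar]

/-- The iterated operator. -/
def foldD (L : List (Fin (2*n))) (f : MvPolynomial (Fin (2*n)) Fq) :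
    MvPolynomial (Fin (2*n)) Fq :=
  L.foldr (fun k acc => D k acc) f

lemma foldD_eq (L : List (Fin (2*n))) (f : MvPolynomial (Fin (2*n)) Fq) :
    foldD D L f = L.foldr (fun k acc => D k acc) f := rfl

lemma foldD_add (hD : ∀ k, IsDOp qQ k (D k)) (L : List (Fin (2*n))) (f g : MvPolynomial (Fin (2*n)) Fq) :
    foldD D L (f + g) = foldD D L f + foldD D L g := by
  induction L with
  | nil => rfl
  | cons k L ih =>
    show D k (foldD D L (f + g)) = D k (foldD D L f) + D k (foldD D L g)
    rw [ih, D_add D hD]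

lemma foldD_smul (hD : ∀ k, IsDOp qQ k (D k)) (L : List (Fin (2*n))) (c : Fq) (f : MvPolynomial (Fin (2*n)) Fq) :
    foldD D L (c • f) = c • foldD D L f := by
  induction L with
  | nil => rfl
  | cons k L ih =>
    show D k (foldD D L (c • f)) = c • D k (foldD D L f)
    rw [ih, D_smul D hD]

lemma foldD_zero (hD : ∀ k, IsDOp qQ k (D k)) (L : List (Fin (2*n))) : foldD D L 0 = 0 := by
  induction L with
  | nil => rfl
  | cons k L ih =>
    show D k (foldD D L 0) = 0
    rw [ih, D_zero D hD]

lemma foldD_sum {ι : Type*} (hD : ∀ k, IsDOp qQ k (D k)) (L : List (Fin (2*n))) (s : Finset ι)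
    (f : ι → MvPolynomial (Fin (2*n)) Fq) :
    foldD D L (∑ i ∈ s, f i) = ∑ i ∈ s, foldD D L (f i) := by
  classical
  induction s using Finset.induction_on with
  | empty => simpa using foldD_zero D hD L
  | insert x s hx ih =>
    rw [Finset.sum_insert hx, Finset.sum_insert hx, foldD_add D hD, ih]

lemma D_W (hD : ∀ k, IsDOp qQ k (D k)) (k : Fin (2*n)) {r : ℕ} {f : MvPolynomial (Fin (2*n)) Fq}
    (hf : Wmem (r+1) (tauA _ f)) : Wmem r (tauA _ (D k f)) := by
  have h := congrArg (tauA (Fin (2*n))) (hD k f)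
  rw [map_mul, map_mul, map_sub, map_sub, map_sub] at h
  simp only [swapVar] at h
  rw [tau_rename, tauA_X, tauA_X] at h
  have e : ((X (cycS k) + 1) - (X k + 1) : MvPolynomial (Fin (2*n)) Fq)
      = X (cycS k) - X k := by ring
  rw [e] at h
  have hW : Wmem (r+1) ((X (cycS k) - X k) * tauA (Fin (2*n)) (D k f)) := by
    rw [h]
    exact Wmem.mul_left _ (Wmem.sub (hf.rename _) hf)
  exact Wmem_cancel (cycS_ne k) hW

lemma fold_W (hD : ∀ k, IsDOp qQ k (D k)) (L : List (Fin (2*n))) (f : MvPolynomial (Fin (2*n)) Fq) (r : ℕ)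
    (h : Wmem (L.length + r) (tauA _ f)) : Wmem r (tauA _ (foldD D L f)) := by
  induction L generalizing r with
  | nil => simpa [foldD] using h
  | cons k L ih =>
    have h' : Wmem (L.length + (r + 1)) (tauA _ f) := by
      have : L.length + (r + 1) = (k :: L).length + r := by simp [List.length_cons]; omega
      rwa [this]
    exact D_W D hD k (ih (r + 1) h')

lemma eval1_of_Wmem1 {f : MvPolynomial (Fin (2*n)) Fq} (h : Wmem 1 (tauA _ f)) :
    eval (fun _ => (1 : Fq)) f = 0 := by
  rw [eval1_eq]
  exact h 0 (by simp)

end Dops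

section PolyDeg

/-- `c` is a polynomial function of total degree at most `d` of its (cast) arguments. -/
def PolyDeg {T : Type*} (d : ℕ) (c : (T → ℕ) → Fq) : Prop :=
  ∃ Q : MvPolynomial T Fq, Q.totalDegree ≤ d ∧
    ∀ e : T → ℕ, c e = eval (fun t => ((e t : ℕ) : Fq)) Q

variable {T : Type*}

lemma PolyDeg.congr {d : ℕ} {c c' : (T → ℕ) → Fq} (h : PolyDeg d c)
    (hc : ∀ e, c e = c' e) : PolyDeg d c' := by
  obtain ⟨Q, h1, h2⟩ := h
  exact ⟨Q, h1, fun e => (hc e) ▸ h2 e⟩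

lemma PolyDeg.mono {d d' : ℕ} (h : d ≤ d') {c : (T → ℕ) → Fq} (hc : PolyDeg d c) :
    PolyDeg d' c := by
  obtain ⟨Q, h1, h2⟩ := hc
  exact ⟨Q, le_trans h1 h, h2⟩

lemma polyDeg_const (d : ℕ) (x : Fq) : PolyDeg (T := T) d (fun _ => x) :=
  ⟨C x, by rw [totalDegree_C]; exact Nat.zero_le _, fun e => by rw [eval_C]⟩

lemma PolyDeg.mul {d1 d2 : ℕ} {c1 c2 : (T → ℕ) → Fq} (h1 : PolyDeg d1 c1)
    (h2 : PolyDeg d2 c2) : PolyDeg (d1 + d2) (fun e => c1 e * c2 e) := by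
  obtain ⟨Q1, hQ1, he1⟩ := h1
  obtain ⟨Q2, hQ2, he2⟩ := h2
  exact ⟨Q1 * Q2, le_trans (totalDegree_mul _ _) (add_le_add hQ1 hQ2),
    fun e => by show c1 e * c2 e = _; rw [map_mul, he1 e, he2 e]⟩

lemma PolyDeg.add {d : ℕ} {c1 c2 : (T → ℕ) → Fq} (h1 : PolyDeg d c1)
    (h2 : PolyDeg d c2) : PolyDeg d (fun e => c1 e + c2 e) := by
  obtain ⟨Q1, hQ1, he1⟩ := h1
  obtain ⟨Q2, hQ2, he2⟩ := h2
  exact ⟨Q1 + Q2, le_trans (totalDegree_add _ _) (max_le hQ1 hQ2),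
    fun e => by show c1 e + c2 e = _; rw [map_add, he1 e, he2 e]⟩

lemma polyDeg_sum {ι : Type*} (s : Finset ι) (d : ℕ) (c : ι → (T → ℕ) → Fq)
    (h : ∀ i ∈ s, PolyDeg d (c i)) :
    PolyDeg d (fun e => ∑ i ∈ s, c i e) := by
  classical
  induction s using Finset.induction_on with
  | empty => exact (polyDeg_const d 0).congr (by simp)
  | @insert x s hx ih =>
    have := (PolyDeg.add (h x (Finset.mem_insert_self _ _))
      (ih (fun i hi => h i (Finset.mem_insert_of_mem hi))))
    exact this.congr (fun e => by rw [Finset.sum_insert hx])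

lemma cast_factorial_mul_choose (a k : ℕ) :
    ((k.factorial : Fq)) * (a.choose k : Fq) = ∏ i ∈ Finset.range k, ((a : Fq) - (i : Fq)) := by
  rcases le_or_gt k a with hak | hak
  · have hd : ((a.descFactorial k : ℕ) : Fq) = ∏ i ∈ Finset.range k, ((a : Fq) - (i : Fq)) := by
      rw [Nat.descFactorial_eq_prod_range, Nat.cast_prod]
      apply Finset.prod_congr rfl
      intro i hi
      have hia : i ≤ a := le_trans (Nat.le_of_lt (Finset.mem_range.mp hi)) hak
      rw [Nat.cast_sub hia]
    rw [← hd, Nat.descFactorial_eq_factorial_mul_choose, Nat.cast_mul]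
  · rw [Nat.choose_eq_zero_of_lt hak, Nat.cast_zero, mul_zero]
    symm
    apply Finset.prod_eq_zero (Finset.mem_range.mpr hak)
    simp

lemma polyDeg_choose (t : T) (k : ℕ) :
    PolyDeg k (fun e : T → ℕ => ((e t).choose k : Fq)) := by
  haveI : CharZero Fq := charZero_Fq
  refine ⟨C (((k.factorial : Fq))⁻¹) * ∏ i ∈ Finset.range k, (X t - C (i : Fq)), ?_, ?_⟩
  · refine le_trans (totalDegree_mul _ _) ?_
    rw [totalDegree_C, zero_add]
    refine le_trans (totalDegree_finset_prod _ _) ?_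
    refine le_trans (Finset.sum_le_sum (g := fun _ => 1) (fun i _ => ?_)) ?_
    · rw [sub_eq_add_neg, ← C_neg]
      refine le_trans (totalDegree_add _ _) ?_
      rw [totalDegree_X, totalDegree_C]
      simp
    · simp
  · intro e
    have hk : (k.factorial : Fq) ≠ 0 := Nat.cast_ne_zero.mpr k.factorial_ne_zero
    rw [map_mul, eval_C, map_prod]
    have : ∏ i ∈ Finset.range k, eval (fun t' => ((e t' : ℕ) : Fq)) (X t - C (i : Fq))
        = ∏ i ∈ Finset.range k, (((e t : ℕ) : Fq) - (i : Fq)) := by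
      apply Finset.prod_congr rfl
      intro i _
      simp
    rw [this, ← cast_factorial_mul_choose, inv_mul_cancel_left₀ hk]

end PolyDeg

section CoeffProd

variable {σt : Type*}

lemma coeff_one_add_pow {ℓ : MvPolynomial σt Fq} (hl : ℓ.IsHomogeneous 1) (e : ℕ)
    (ρ : σt →₀ ℕ) :
    coeff ρ ((1 + ℓ) ^ e) = (e.choose ρ.degree : Fq) * coeff ρ (ℓ ^ ρ.degree) := by
  classical
  have hpow : ∀ k : ℕ, ρ.degree ≠ k → coeff ρ (ℓ ^ k) = 0 := by
    intro k hk
    have := (hl.pow k)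
    rw [one_mul] at this
    exact this.coeff_eq_zero hk
  rw [add_comm, add_pow]
  simp only [one_pow, mul_one]
  rw [coeff_sum]
  have hterm : ∀ k : ℕ, coeff ρ (ℓ ^ k * ((e.choose k : ℕ) : MvPolynomial σt Fq))
      = coeff ρ (ℓ ^ k) * ((e.choose k : ℕ) : Fq) := by
    intro k
    rw [← C_eq_coe_nat, mul_comm, coeff_C_mul, mul_comm]
  rcases le_or_gt ρ.degree e with hle | hlt
  · rw [Finset.sum_eq_single ρ.degree]
    · rw [hterm, mul_comm]
    · intro k _ hk
      rw [hterm, hpow k (Ne.symm hk), zero_mul]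
    · intro hmem
      exact absurd (Finset.mem_range.mpr (by omega)) hmem
  · rw [Nat.choose_eq_zero_of_lt hlt, Nat.cast_zero, zero_mul]
    apply Finset.sum_eq_zero
    intro k hk
    have : ρ.degree ≠ k := by
      have := Finset.mem_range.mp hk
      omega
    rw [hterm, hpow k this, zero_mul]

lemma polyDeg_coeff_prod {T : Type*} [DecidableEq T] (ℓ : T → MvPolynomial σt Fq)
    (hl : ∀ t, (ℓ t).IsHomogeneous 1) (s : Finset T) :
    ∀ μ : σt →₀ ℕ,
      PolyDeg μ.degree (fun e : T → ℕ => coeff μ (∏ t ∈ s, (1 + ℓ t) ^ (e t))) := by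
  classical
  induction s using Finset.induction_on with
  | empty =>
    intro μ
    exact (polyDeg_const μ.degree (coeff μ 1)).congr (fun e => by simp)
  | @insert v s hv ih =>
    intro μ
    have key : ∀ e : T → ℕ, coeff μ (∏ t ∈ insert v s, (1 + ℓ t) ^ (e t))
        = ∑ x ∈ Finset.HasAntidiagonal.antidiagonal μ,
            ((e v).choose x.1.degree : Fq) * coeff x.1 ((ℓ v) ^ x.1.degree)
              * coeff x.2 (∏ t ∈ s, (1 + ℓ t) ^ (e t)) := by
      intro e
      rw [Finset.prod_insert hv, coeff_mul]
      apply Finset.sum_congr rfl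
      intro x _
      rw [coeff_one_add_pow (hl v) (e v) x.1]
    refine (polyDeg_sum (Finset.HasAntidiagonal.antidiagonal μ) μ.degree _ ?_).congr
      (fun e => (key e).symm)
    intro x hx
    have hxsum : x.1.degree + x.2.degree = μ.degree := by
      rw [← degree_add, Finset.HasAntidiagonal.mem_antidiagonal.mp hx]
    have h1 := polyDeg_choose (T := T) v x.1.degree
    have h2 := polyDeg_const (T := T) 0 (coeff x.1 ((ℓ v) ^ x.1.degree))
    have h3 := ih x.2
    have := (h1.mul h2).mul h3
    refine this.mono (by omega) |>.congr (fun e => rfl)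

end CoeffProd

section Atoms

variable {n : ℕ}

/-- The index type of the atoms. -/
abbrev VT (n : ℕ) := (Fin (2*n) × Fin (2*n)) ⊕ (Fin (2*n) ⊕ Fin (2*n))

/-- The linear part of the shifted atoms. -/
def ell (n : ℕ) : VT n → MvPolynomial (Fin (2*n)) Fq
  | Sum.inl ij =>
      if ij.1 ≠ ij.2 then C (qQ - qQ⁻¹)⁻¹ * (C qQ * X ij.1 - C qQ⁻¹ * X ij.2) else 0
  | Sum.inr (Sum.inl i) => C (qQ - qQ⁻¹)⁻¹ * (-(C qQ⁻¹ * X i))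
  | Sum.inr (Sum.inr i) => C (qQ - qQ⁻¹)⁻¹ * (C qQ * X i)

/-- The exponent function. -/
def EE (n : ℕ) (α : Fin (2*n) → Fin (2*n) → ℕ) (β γ : Fin (2*n) → ℕ) : VT n → ℕ
  | Sum.inl ij => α ij.1 ij.2
  | Sum.inr (Sum.inl i) => β i
  | Sum.inr (Sum.inr i) => γ i

lemma ell_hom (v : VT n) : (ell n v).IsHomogeneous 1 := by
  rcases v with ij | (i | i)
  · rw [ell]
    split_ifs
    · exact (((isHomogeneous_C_mul_X qQ ij.1).sub
        (isHomogeneous_C_mul_X qQ⁻¹ ij.2))).C_mul _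
    · exact isHomogeneous_zero _ _ _
  · exact ((isHomogeneous_C_mul_X qQ⁻¹ i).neg).C_mul _
  · exact (isHomogeneous_C_mul_X qQ i).C_mul _

lemma hC1 : (C ((qQ - qQ⁻¹)⁻¹) * (C qQ - C qQ⁻¹) : MvPolynomial (Fin (2*n)) Fq) = 1 := by
  rw [← C_sub, ← C_mul, inv_mul_cancel₀ qQ_sub_ne, C_1]

lemma tau_fP (i j : Fin (2*n)) :
    tauA _ (fP qQ i j) = 1 + C (qQ - qQ⁻¹)⁻¹ * (C qQ * X i - C qQ⁻¹ * X j) := by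
  have h := hC1 (n := n)
  simp only [fP, tauA, map_mul, map_sub, aeval_X, aeval_C, algebraMap_eq]
  linear_combination h

lemma tau_gP (i : Fin (2*n)) :
    tauA _ (gP qQ i) = 1 + C (qQ - qQ⁻¹)⁻¹ * (-(C qQ⁻¹ * X i)) := by
  have h := hC1 (n := n)
  simp only [gP, tauA, map_mul, map_sub, aeval_X, aeval_C, algebraMap_eq]
  linear_combination h

lemma tau_hP (i : Fin (2*n)) :
    tauA _ (hP qQ i) = 1 + C (qQ - qQ⁻¹)⁻¹ * (C qQ * X i) := by
  have h := hC1 (n := n)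
  simp only [hP, tauA, map_mul, map_sub, aeval_X, aeval_C, algebraMap_eq]
  linear_combination h

lemma tau_Pabg (α : Fin (2*n) → Fin (2*n) → ℕ) (β γ : Fin (2*n) → ℕ) :
    tauA _ (Pabg qQ n α β γ) = ∏ v : VT n, (1 + ell n v) ^ (EE n α β γ v) := by
  classical
  rw [Fintype.prod_sum_type]
  rw [Fintype.prod_prod_type (f := fun ij : Fin (2*n) × Fin (2*n) =>
    (1 + ell n (Sum.inl ij)) ^ (EE n α β γ (Sum.inl ij)))]
  rw [Fintype.prod_sum_type (f := fun w : Fin (2*n) ⊕ Fin (2*n) =>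
    (1 + ell n (Sum.inr w)) ^ (EE n α β γ (Sum.inr w)))]
  rw [Pabg, map_mul, map_prod, map_prod]
  congr 1
  · apply Finset.prod_congr rfl
    intro i _
    rw [map_prod]
    apply Finset.prod_congr rfl
    intro j _
    by_cases hij : i = j
    · subst hij
      rw [if_neg (by simp)]
      have : ell n (Sum.inl (i, i)) = 0 := by simp [ell]
      simp [this, EE]
    · rw [if_pos (by exact hij), map_pow, tau_fP]
      have : ell n (Sum.inl (i, j)) = C (qQ - qQ⁻¹)⁻¹ * (C qQ * X i - C qQ⁻¹ * X j) := by
        simp [ell, hij]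
      rw [this]
      rfl
  · rw [← Finset.prod_mul_distrib]
    apply Finset.prod_congr rfl
    intro i _
    rw [map_mul, map_pow, map_pow, tau_gP, tau_hP]
    rfl

end Atoms

end Aux18
end Aux18

theorem stmt18 (n : ℕ) (m : ℕ) (idxs : Fin m → Fin (2*n))
    (D : Fin (2*n) → MvPolynomial (Fin (2*n)) (RatFunc ℚ) → MvPolynomial (Fin (2*n)) (RatFunc ℚ))
    (hD : ∀ k, IsDOp qQ k (D k)) :
    ∃ Q : MvPolynomial ((Fin (2*n) × Fin (2*n)) ⊕ (Fin (2*n) ⊕ Fin (2*n))) (RatFunc ℚ),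
      Q.totalDegree ≤ m ∧
      ∀ (α : Fin (2*n) → Fin (2*n) → ℕ) (β γ : Fin (2*n) → ℕ),
        MvPolynomial.eval (fun _ => (1 : RatFunc ℚ))
          ((List.ofFn idxs).foldr (fun k acc => D k acc) (Pabg qQ n α β γ)) =
        MvPolynomial.eval (fun v => match v with
          | Sum.inl ij => ((α ij.1 ij.2 : ℕ) : RatFunc ℚ)
          | Sum.inr (Sum.inl i) => ((β i : ℕ) : RatFunc ℚ)
          | Sum.inr (Sum.inr i) => ((γ i : ℕ) : RatFunc ℚ)) Q := by
  classical
  set L : List (Fin (2*n)) := List.ofFn idxs with hL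
  have hlen : L.length = m := by simp [hL]
  set Big : Finset (Fin (2*n) →₀ ℕ) :=
    ((Finset.univ : Finset (Fin (2*n) → Fin (m+1))).image
      (fun f => Finsupp.equivFunOnFinite.symm (fun i => ((f i : ℕ))))).filter
      (fun μ => μ.degree ≤ m) with hBigdef
  have hBig : ∀ μ : Fin (2*n) →₀ ℕ, μ.degree ≤ m → μ ∈ Big := by
    intro μ hμ
    refine Finset.mem_filter.mpr
      ⟨Finset.mem_image.mpr ⟨fun i => ⟨μ i, ?_⟩, Finset.mem_univ _, ?_⟩, hμ⟩
    · exact Nat.lt_succ_of_le (le_trans (Finsupp.le_degree i μ) hμ)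
    · ext i
      simp
  have hBigdeg : ∀ μ ∈ Big, μ.degree ≤ m := fun μ hμ => (Finset.mem_filter.mp hμ).2
  set lam : (Fin (2*n) →₀ ℕ) → RatFunc ℚ := fun μ =>
    MvPolynomial.eval (fun _ => (1 : RatFunc ℚ))
      (L.foldr (fun k acc => D k acc)
        (Aux18.sigA (Fin (2*n)) (monomial μ (1 : RatFunc ℚ)))) with hlam
  have hPD := fun μ : Fin (2*n) →₀ ℕ =>
    Aux18.polyDeg_coeff_prod (Aux18.ell n) (Aux18.ell_hom) Finset.univ μ
  choose Qf hQdeg hQeval using hPD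
  refine ⟨∑ μ ∈ Big, C (lam μ) * Qf μ, ?_, ?_⟩
  · refine le_trans (totalDegree_finset_sum _ _) ?_
    apply Finset.sup_le
    intro μ hμ
    refine le_trans (totalDegree_mul _ _) ?_
    rw [totalDegree_C, zero_add]
    exact le_trans (hQdeg μ) (hBigdeg μ hμ)
  · intro α β γ
    have hptfun : (fun v : (Fin (2*n) × Fin (2*n)) ⊕ (Fin (2*n) ⊕ Fin (2*n)) =>
        match v with
        | Sum.inl ij => ((α ij.1 ij.2 : ℕ) : RatFunc ℚ)
        | Sum.inr (Sum.inl i) => ((β i : ℕ) : RatFunc ℚ)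
        | Sum.inr (Sum.inr i) => ((γ i : ℕ) : RatFunc ℚ))
        = fun v => ((Aux18.EE n α β γ v : ℕ) : RatFunc ℚ) := by
      funext v
      rcases v with ij | (i | i) <;> rfl
    rw [hptfun]
    set P := Pabg qQ n α β γ with hPdef
    set G : MvPolynomial (Fin (2*n)) (RatFunc ℚ) :=
      Aux18.sigA (Fin (2*n))
        (∑ μ ∈ Big, monomial μ (coeff μ (Aux18.tauA (Fin (2*n)) P))) with hGdef
    have hWR : Aux18.Wmem (m+1) (Aux18.tauA (Fin (2*n)) (P - G)) := by
      rw [map_sub, hGdef, Aux18.tau_sig]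
      intro m' hm'
      rw [coeff_sub, coeff_sum]
      have hmem : m' ∈ Big := hBig m' (by omega)
      rw [Finset.sum_eq_single m']
      · rw [coeff_monomial, if_pos rfl, sub_self]
      · intro μ _ hμ
        rw [coeff_monomial, if_neg hμ]
      · intro hnm
        exact absurd hmem hnm
    have hfold_split : L.foldr (fun k acc => D k acc) P
        = L.foldr (fun k acc => D k acc) G + L.foldr (fun k acc => D k acc) (P - G) := by
      have hPG : P = G + (P - G) := by ring
      conv_lhs => rw [hPG]
      rw [← Aux18.foldD_eq D, ← Aux18.foldD_eq D, ← Aux18.foldD_eq D]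
      exact Aux18.foldD_add D hD L G (P - G)
    have hzero : MvPolynomial.eval (fun _ => (1 : RatFunc ℚ))
        (L.foldr (fun k acc => D k acc) (P - G)) = 0 := by
      apply Aux18.eval1_of_Wmem1
      rw [← Aux18.foldD_eq D]
      apply Aux18.fold_W D hD L (P - G) 1
      rw [hlen]
      exact hWR
    have hfoldG : MvPolynomial.eval (fun _ => (1 : RatFunc ℚ))
        (L.foldr (fun k acc => D k acc) G)
        = ∑ μ ∈ Big, coeff μ (Aux18.tauA (Fin (2*n)) P) * lam μ := by
      rw [hGdef, ← Aux18.foldD_eq D, map_sum, Aux18.foldD_sum D hD, map_sum]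
      apply Finset.sum_congr rfl
      intro μ _
      have hmon : (monomial μ (coeff μ (Aux18.tauA (Fin (2*n)) P)))
          = coeff μ (Aux18.tauA (Fin (2*n)) P) • monomial μ (1 : RatFunc ℚ) := by
        rw [smul_monomial, smul_eq_mul, mul_one]
      rw [hmon, map_smul, Aux18.foldD_smul D hD, smul_eq_C_mul, map_mul, eval_C,
        Aux18.foldD_eq D, hlam]
    have hcoeff : ∀ μ : Fin (2*n) →₀ ℕ, coeff μ (Aux18.tauA (Fin (2*n)) P)
        = MvPolynomial.eval (fun t => ((Aux18.EE n α β γ t : ℕ) : RatFunc ℚ)) (Qf μ) := by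
      intro μ
      rw [hPdef, Aux18.tau_Pabg]
      exact hQeval μ (Aux18.EE n α β γ)
    calc MvPolynomial.eval (fun _ => (1 : RatFunc ℚ)) (L.foldr (fun k acc => D k acc) P)
        = MvPolynomial.eval (fun _ => (1 : RatFunc ℚ)) (L.foldr (fun k acc => D k acc) G)
          + MvPolynomial.eval (fun _ => (1 : RatFunc ℚ))
              (L.foldr (fun k acc => D k acc) (P - G)) := by
          rw [hfold_split, map_add]
      _ = ∑ μ ∈ Big, coeff μ (Aux18.tauA (Fin (2*n)) P) * lam μ := by
          rw [hzero, add_zero, hfoldG]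
      _ = MvPolynomial.eval (fun v => ((Aux18.EE n α β γ v : ℕ) : RatFunc ℚ))
            (∑ μ ∈ Big, C (lam μ) * Qf μ) := by
          rw [map_sum]
          apply Finset.sum_congr rfl
          intro μ _
          rw [map_mul, eval_C, hcoeff μ]
          ring
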